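/- Let Ω(K) be the quotient space (𝔸_{f,K} × 𝔸_{f,K})/∼, where (b, a) ∼ (d, c) if and only if a·R̂ = c·R̂ and b − d ∈ a·R̂, equipped with the quotient topology, and write [b, a] for the class of (b, a). Then the subset Ω(R) = { [b, a] ∈ Ω(K) : b ∈ R̂ and a ∈ R̂ } is clopen (both closed and open) in Ω(K). -/

import Mathlib

open NumberField IsDedekindDomain nonZeroDivisors

/-- Let `Ω(K)` be the quotient of `𝔸_{f,K} × 𝔸_{f,K}` (with the product topology) by the
relation `(b, a) ∼ (d, c)` iff `a·R̂ = c·R̂` and `b - d ∈ a·R̂`, equipped with the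
quotient topology.  Then the subset `Ω(R) = {[b, a] : b, a ∈ R̂}` is clopen in `Ω(K)`. -/
theorem omegaR_is_clopen
    (K : Type*) [Field K] [NumberField K]
    (Rhat : Set (FiniteAdeleRing (𝓞 K) K))
    (hRhat : Rhat = {x : FiniteAdeleRing (𝓞 K) K |
      ∀ v : HeightOneSpectrum (𝓞 K), x v ∈ v.adicCompletionIntegers K})
    (r : FiniteAdeleRing (𝓞 K) K × FiniteAdeleRing (𝓞 K) K →
      FiniteAdeleRing (𝓞 K) K × FiniteAdeleRing (𝓞 K) K → Prop)
    (hr : ∀ x y, r x y ↔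
      ((x.2 * ·) '' Rhat = (y.2 * ·) '' Rhat ∧ x.1 - y.1 ∈ (x.2 * ·) '' Rhat)) :
    IsClopen {ω : Quot r | ∃ b a : FiniteAdeleRing (𝓞 K) K,
      b ∈ Rhat ∧ a ∈ Rhat ∧ ω = Quot.mk r (b, a)} := by
  -- Basic closure properties of `Rhat`.
  have one_mem : (1 : FiniteAdeleRing (𝓞 K) K) ∈ Rhat := by
    rw [hRhat]; intro v; exact one_mem _
  have mul_mem' : ∀ {x y : FiniteAdeleRing (𝓞 K) K}, x ∈ Rhat → y ∈ Rhat → x * y ∈ Rhat := by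
    rw [hRhat]; intro x y hx hy v; exact mul_mem (hx v) (hy v)
  have sub_mem' : ∀ {x y : FiniteAdeleRing (𝓞 K) K}, x ∈ Rhat → y ∈ Rhat → x - y ∈ Rhat := by
    rw [hRhat]; intro x y hx hy v; exact sub_mem (hx v) (hy v)
  have add_mem' : ∀ {x y : FiniteAdeleRing (𝓞 K) K}, x ∈ Rhat → y ∈ Rhat → x + y ∈ Rhat := by
    rw [hRhat]; intro x y hx hy v; exact add_mem (hx v) (hy v)
  -- If `a ∈ Rhat`, then `a·Rhat ⊆ Rhat`.
  have image_subset : ∀ {a : FiniteAdeleRing (𝓞 K) K}, a ∈ Rhat →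
      (a * ·) '' Rhat ⊆ Rhat := by
    rintro a ha _ ⟨s, hs, rfl⟩
    exact mul_mem' ha hs
  have self_mem_image : ∀ a : FiniteAdeleRing (𝓞 K) K, a ∈ (a * ·) '' Rhat :=
    fun a => ⟨1, one_mem, mul_one a⟩
  -- Membership in `Rhat × Rhat` is invariant under `r`.
  have inv : ∀ x y, r x y → (x.1 ∈ Rhat ∧ x.2 ∈ Rhat ↔ y.1 ∈ Rhat ∧ y.2 ∈ Rhat) := by
    intro x y hxy
    obtain ⟨h1, h2⟩ := (hr x y).1 hxy
    constructor
    · rintro ⟨hx1, hx2⟩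
      have hy2 : y.2 ∈ Rhat := image_subset hx2 (h1 ▸ self_mem_image y.2)
      have hd : x.1 - y.1 ∈ Rhat := image_subset hx2 h2
      have hy1 : x.1 - (x.1 - y.1) ∈ Rhat := sub_mem' hx1 hd
      simp only [sub_sub_cancel] at hy1
      exact ⟨hy1, hy2⟩
    · rintro ⟨hy1, hy2⟩
      have hx2 : x.2 ∈ Rhat := image_subset hy2 (h1 ▸ self_mem_image x.2)
      have hd : x.1 - y.1 ∈ Rhat := image_subset hx2 h2
      have hx1 : x.1 - y.1 + y.1 ∈ Rhat := add_mem' hd hy1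
      simp only [sub_add_cancel] at hx1
      exact ⟨hx1, hx2⟩
  have invG : ∀ x y, Relation.EqvGen r x y →
      (x.1 ∈ Rhat ∧ x.2 ∈ Rhat ↔ y.1 ∈ Rhat ∧ y.2 ∈ Rhat) := by
    intro x y h
    induction h with
    | rel a b hab => exact inv a b hab
    | refl a => exact Iff.rfl
    | symm a b _ ih => exact ih.symm
    | trans a b c _ _ ih1 ih2 => exact ih1.trans ih2
  -- The preimage of our set under `Quot.mk r` is `Rhat ×ˢ Rhat`.
  have hpre : Quot.mk r ⁻¹' {ω : Quot r | ∃ b a : FiniteAdeleRing (𝓞 K) K,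
      b ∈ Rhat ∧ a ∈ Rhat ∧ ω = Quot.mk r (b, a)} = Rhat ×ˢ Rhat := by
    ext x
    constructor
    · rintro ⟨b, a, hb, ha, heq⟩
      have h := Quot.eq.1 heq
      exact (invG x (b, a) h).2 ⟨hb, ha⟩
    · rintro ⟨h1, h2⟩
      exact ⟨x.1, x.2, h1, h2, rfl⟩
  -- `Rhat` is clopen.
  have hclopen : IsClopen Rhat := by
    have hopen : IsOpen Rhat := by
      rw [hRhat]
      exact RestrictedProduct.isOpen_forall_mem (fun v => Valued.isOpen_valuationSubring _)
    let M : AddSubgroup (FiniteAdeleRing (𝓞 K) K) :=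
      { carrier := Rhat, add_mem' := add_mem',
        zero_mem' := by simpa using sub_mem' one_mem one_mem,
        neg_mem' := fun {x} hx => by simpa using sub_mem' (sub_mem' one_mem one_mem) hx }
    exact ⟨AddSubgroup.isClosed_of_isOpen M hopen, hopen⟩
  constructor
  · rw [← isQuotientMap_quot_mk.isClosed_preimage, hpre]
    exact hclopen.1.prod hclopen.1
  · rw [← isQuotientMap_quot_mk.isOpen_preimage, hpre]
    exact hclopen.2.prod hclopen.2
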